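/- In the Zeroing Algorithm one has Q_t(r) = r^t · Q_0(r) for all t ≥ 0; consequently, for each 1 ≤ n ≤ k the limit lim_{t→∞} q(n,t)/r^t exists and is positive, zero, or negative according as Q_0(r) is positive, zero, or negative. -/

import Mathlib

open Polynomial Filter Finset


lemma bez_finset (S : Finset ℕ) :
    ∃ u ∈ AddSubmonoid.closure (S : Set ℕ), ∃ v ∈ AddSubmonoid.closure (S : Set ℕ),
      u = v + S.gcd id := by
  classical
  induction S using Finset.induction_on with
  | empty => exact ⟨0, zero_mem _, 0, zero_mem _, by simp⟩
  | @insert a s ha ih =>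
    obtain ⟨u', hu', v', hv', huv⟩ := ih
    have hmono : AddSubmonoid.closure (s : Set ℕ) ≤ AddSubmonoid.closure ((insert a s : Finset ℕ) : Set ℕ) :=
      AddSubmonoid.closure_mono (by simp)
    have hu2 := hmono hu'
    have hv2 := hmono hv'
    have haM : a ∈ AddSubmonoid.closure ((insert a s : Finset ℕ) : Set ℕ) :=
      AddSubmonoid.subset_closure (by simp)
    set g' := s.gcd id with hg'
    have hgi : (insert a s).gcd id = Nat.gcd a g' := by
      rw [Finset.gcd_insert]; rfl
    set x : ℤ := Nat.gcdA a g'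
    set y : ℤ := Nat.gcdB a g'
    have hbez : (Nat.gcd a g' : ℤ) = a * x + g' * y := Nat.gcd_eq_gcd_ab a g'
    refine ⟨x.toNat * a + (y.toNat * u' + (-y).toNat * v'), ?_,
            (-x).toNat * a + ((-y).toNat * u' + y.toNat * v'), ?_, ?_⟩
    · exact add_mem (by simpa [nsmul_eq_mul] using AddSubmonoid.nsmul_mem _ haM x.toNat)
        (add_mem (by simpa [nsmul_eq_mul] using AddSubmonoid.nsmul_mem _ hu2 y.toNat)
          (by simpa [nsmul_eq_mul] using AddSubmonoid.nsmul_mem _ hv2 (-y).toNat))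
    · exact add_mem (by simpa [nsmul_eq_mul] using AddSubmonoid.nsmul_mem _ haM (-x).toNat)
        (add_mem (by simpa [nsmul_eq_mul] using AddSubmonoid.nsmul_mem _ hu2 (-y).toNat)
          (by simpa [nsmul_eq_mul] using AddSubmonoid.nsmul_mem _ hv2 y.toNat))
    · rw [hgi]
      have h1 : (x.toNat : ℤ) - (-x).toNat = x := Int.toNat_sub_toNat_neg x
      have h2 : (y.toNat : ℤ) - (-y).toNat = y := Int.toNat_sub_toNat_neg y
      have h3 : (u' : ℤ) = v' + g' := by exact_mod_cast huv
      have : (x.toNat * a + (y.toNat * u' + (-y).toNat * v') : ℤ)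
          = ((-x).toNat * a + ((-y).toNat * u' + y.toNat * v')) + Nat.gcd a g' := by
        rw [hbez]; nlinarith [h1, h2, h3]
      exact_mod_cast this

lemma semigroup_large (S : Finset ℕ) (h : S.gcd id = 1) :
    ∃ N, ∀ n, N ≤ n → n ∈ AddSubmonoid.closure (S : Set ℕ) := by
  obtain ⟨u, hu, v, hv, huv⟩ := bez_finset S
  rw [h] at huv
  rcases Nat.eq_zero_or_pos v with hv0 | hv0
  · subst hv0
    simp only [zero_add] at huv; subst huv
    exact ⟨0, fun n _ => by simpa using AddSubmonoid.nsmul_mem _ hu n⟩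
  · refine ⟨v * v, fun n hn => ?_⟩
    have hs : n % v < v := Nat.mod_lt _ hv0
    have hq : n % v ≤ n / v := by
      have : v ≤ n / v := (Nat.le_div_iff_mul_le hv0).2 (by nlinarith)
      omega
    obtain ⟨d, hd⟩ := Nat.exists_eq_add_of_le hq
    have hmod := Nat.mod_add_div n v
    have hrep : n = (n % v) • u + d • v := by
      simp only [smul_eq_mul, huv]
      have : (n % v) * (v + 1) + d * v = n % v + v * (n % v + d) := by ring
      rw [this, ← hd, hmod]
    rw [hrep]
    exact add_mem (AddSubmonoid.nsmul_mem _ hu _) (AddSubmonoid.nsmul_mem _ hv _)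

lemma renewal_conv (k : ℕ) (hk : 1 ≤ k) (p : ℕ → ℝ) (S : Finset ℕ)
    (hS : S ⊆ Finset.Icc 1 k) (hkS : k ∈ S) (hgcd : S.gcd id = 1)
    (hpos : ∀ m ∈ S, 0 < p m) (hzero : ∀ m ∈ Finset.Icc 1 k, m ∉ S → p m = 0)
    (hsum : ∑ m ∈ Finset.Icc 1 k, p m = 1)
    (a : ℕ → ℝ) (ha : ∀ t, a (t + k) = ∑ m ∈ Finset.Icc 1 k, p m * a (t + k - m)) :
    ∃ A, Filter.Tendsto a Filter.atTop (nhds A) := by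
  classical
  have Sne : S.Nonempty := ⟨k, hkS⟩
  have hp0 : ∀ m ∈ Finset.Icc 1 k, 0 ≤ p m := by
    intro m hm
    by_cases h : m ∈ S
    · exact (hpos m h).le
    · rw [hzero m hm h]
  have hp1 : ∀ m ∈ Finset.Icc 1 k, p m ≤ 1 := by
    intro m hm
    calc p m ≤ ∑ m ∈ Finset.Icc 1 k, p m := Finset.single_le_sum hp0 hm
    _ = 1 := hsum
  set δ : ℝ := S.inf' Sne p with hδ
  have hδpos : 0 < δ := (Finset.lt_inf'_iff Sne).2 fun m hm => hpos m hm
  have hδ1 : δ ≤ 1 := le_trans (Finset.inf'_le p hkS) (hp1 k (by simp; omega))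
  have hrange : (Finset.range k).Nonempty := Finset.nonempty_range_iff.2 (by omega)
  set M : ℕ → ℝ := fun t => (Finset.range k).sup' hrange (fun i => a (t + i)) with hM
  set m : ℕ → ℝ := fun t => (Finset.range k).inf' hrange (fun i => a (t + i)) with hm
  have aM : ∀ t i, i < k → a (t + i) ≤ M t := by
    intro t i hi
    simp only [hM]
    exact Finset.le_sup' (fun i => a (t + i)) (Finset.mem_range.2 hi)
  have am : ∀ t i, i < k → m t ≤ a (t + i) := by
    intro t i hi
    simp only [hm]
    exact Finset.inf'_le (fun i => a (t + i)) (Finset.mem_range.2 hi)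
  have ha' : ∀ u, k ≤ u → a u = ∑ x ∈ Finset.Icc 1 k, p x * a (u - x) := by
    intro u hu
    have h1 : u - k + k = u := by omega
    have := ha (u - k)
    rw [h1] at this
    exact this
  have hstepM : ∀ t, a (t + k) ≤ M t := by
    intro t
    rw [ha t]
    calc ∑ x ∈ Finset.Icc 1 k, p x * a (t + k - x)
        ≤ ∑ x ∈ Finset.Icc 1 k, p x * M t := by
          apply Finset.sum_le_sum
          intro x hx
          simp only [Finset.mem_Icc] at hx
          have h1 : t + k - x = t + (k - x) := by omega
          exact mul_le_mul_of_nonneg_left (h1 ▸ aM t (k - x) (by omega)) (hp0 x (by simp; omega))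
      _ = M t := by rw [← Finset.sum_mul, hsum, one_mul]
  have hstepm : ∀ t, m t ≤ a (t + k) := by
    intro t
    rw [ha t]
    calc m t = (∑ x ∈ Finset.Icc 1 k, p x) * m t := by rw [hsum, one_mul]
      _ = ∑ x ∈ Finset.Icc 1 k, p x * m t := Finset.sum_mul _ _ _
      _ ≤ ∑ x ∈ Finset.Icc 1 k, p x * a (t + k - x) := by
          apply Finset.sum_le_sum
          intro x hx
          simp only [Finset.mem_Icc] at hx
          have h1 : t + k - x = t + (k - x) := by omega
          exact mul_le_mul_of_nonneg_left (h1 ▸ am t (k - x) (by omega)) (hp0 x (by simp; omega))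
  have hManti : Antitone M := by
    apply antitone_nat_of_succ_le
    intro t
    simp only [hM]
    apply Finset.sup'_le
    intro i hi
    simp only [Finset.mem_range] at hi
    rcases Nat.lt_or_ge (i + 1) k with h | h
    · have h1 : t + 1 + i = t + (i + 1) := by omega
      rw [h1]; exact aM t (i + 1) h
    · have h1 : t + 1 + i = t + k := by omega
      rw [h1]; exact hstepM t
  have hmmono : Monotone m := by
    apply monotone_nat_of_le_succ
    intro t
    simp only [hm]
    apply Finset.le_inf'
    intro i hi
    simp only [Finset.mem_range] at hi
    rcases Nat.lt_or_ge (i + 1) k with h | h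
    · have h1 : t + 1 + i = t + (i + 1) := by omega
      rw [h1]; exact am t (i + 1) h
    · have h1 : t + 1 + i = t + k := by omega
      rw [h1]; exact hstepm t
  have hMle : ∀ t v, t ≤ v → a v ≤ M t := by
    intro t v h
    have : a v = a (v + 0) := by norm_num
    rw [this]
    exact le_trans (aM v 0 (by omega)) (hManti h)
  have hmle : ∀ t v, t ≤ v → m t ≤ a v := by
    intro t v h
    have : a v = a (v + 0) := by norm_num
    rw [this]
    exact le_trans (hmmono h) (am v 0 (by omega))
  have hmM : ∀ t, m t ≤ M t := fun t => le_trans (hmle t t le_rfl) (hMle t t le_rfl)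
  -- the unrolling lemma
  have U : ∀ d ∈ AddSubmonoid.closure (S : Set ℕ), ∀ s t : ℕ, k ≤ t → t ≤ s →
      ∃ w : ℝ, δ ^ d ≤ w ∧ w ≤ 1 ∧ a (s + d) ≤ w * a s + (1 - w) * M (t - k) := by
    intro d hd
    induction hd using AddSubmonoid.closure_induction with
    | mem d hdS =>
      intro s t hkt hts
      have hd1 : 1 ≤ d ∧ d ≤ k := by
        have := hS hdS
        simp only [Finset.mem_Icc] at this
        exact this
      refine ⟨p d, ?_, hp1 d (by simp; omega), ?_⟩
      · calc δ ^ d ≤ δ ^ 1 := pow_le_pow_of_le_one hδpos.le hδ1 hd1.1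
          _ = δ := pow_one δ
          _ ≤ p d := Finset.inf'_le p hdS
      · rw [ha' (s + d) (by omega)]
        rw [Finset.sum_eq_sum_sdiff_singleton_add (by simp; omega : d ∈ Finset.Icc 1 k)
          (fun x => p x * a (s + d - x))]
        have hsd : s + d - d = s := by omega
        rw [hsd]
        have hrest : ∑ x ∈ Finset.Icc 1 k \ {d}, p x * a (s + d - x)
            ≤ ∑ x ∈ Finset.Icc 1 k \ {d}, p x * M (t - k) := by
          apply Finset.sum_le_sum
          intro x hx
          simp only [Finset.mem_sdiff, Finset.mem_Icc] at hx
          refine mul_le_mul_of_nonneg_left ?_ (hp0 x (by simp; omega))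
          exact hMle (t - k) (s + d - x) (by omega)
        have hrsum : ∑ x ∈ Finset.Icc 1 k \ {d}, p x = 1 - p d := by
          have := Finset.sum_eq_sum_sdiff_singleton_add
            (by simp; omega : d ∈ Finset.Icc 1 k) p
          rw [hsum] at this
          linarith
        calc ∑ x ∈ Finset.Icc 1 k \ {d}, p x * a (s + d - x) + p d * a s
            ≤ (∑ x ∈ Finset.Icc 1 k \ {d}, p x) * M (t - k) + p d * a s := by
              rw [Finset.sum_mul]; linarith [hrest]
          _ = p d * a s + (1 - p d) * M (t - k) := by rw [hrsum]; ring
    | zero =>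
      intro s t hkt hts
      exact ⟨1, by norm_num, le_rfl, by norm_num⟩
    | add x y hx hy ihx ihy =>
      intro s t hkt hts
      obtain ⟨w1, hw1δ, hw11, hw1⟩ := ihx s t hkt hts
      obtain ⟨w2, hw2δ, hw21, hw2⟩ := ihy (s + x) t hkt (by omega)
      have hw1pos : 0 < w1 := lt_of_lt_of_le (pow_pos hδpos x) hw1δ
      have hw2pos : 0 < w2 := lt_of_lt_of_le (pow_pos hδpos y) hw2δ
      refine ⟨w1 * w2, ?_, mul_le_one₀ hw11 hw2pos.le hw21, ?_⟩
      · rw [pow_add]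
        exact mul_le_mul hw1δ hw2δ (pow_pos hδpos y).le (le_trans (pow_pos hδpos x).le hw1δ)
      · have h1 : s + (x + y) = s + x + y := by omega
        rw [h1]
        calc a (s + x + y) ≤ w2 * a (s + x) + (1 - w2) * M (t - k) := hw2
          _ ≤ w2 * (w1 * a s + (1 - w1) * M (t - k)) + (1 - w2) * M (t - k) := by
              nlinarith [hw1, hw2pos]
          _ = (w1 * w2) * a s + (1 - w1 * w2) * M (t - k) := by ring
  -- mixing bound
  obtain ⟨N, hN⟩ := semigroup_large S hgcd
  set δL : ℝ := δ ^ (N + 2 * k) with hδL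
  have hδLpos : 0 < δL := pow_pos hδpos _
  have hδL1 : δL ≤ 1 := pow_le_one₀ hδpos.le hδ1
  have key : ∀ t, M (t + k + (N + k)) ≤ δL * m (t + k) + (1 - δL) * M t := by
    intro t
    obtain ⟨i0, hi0mem, hi0⟩ := Finset.exists_mem_eq_inf' hrange (fun i => a (t + k + i))
    simp only [Finset.mem_range] at hi0mem
    have hi0' : m (t + k) = a (t + k + i0) := by rw [hm]; exact hi0
    simp only [hM]
    apply Finset.sup'_le
    intro i hi
    simp only [Finset.mem_range] at hi
    set d : ℕ := N + k + i - i0 with hd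
    have hdN : N ≤ d ∧ d ≤ N + 2 * k := by omega
    have hdmem : d ∈ AddSubmonoid.closure (S : Set ℕ) := hN d hdN.1
    obtain ⟨w, hwδ, hw1, hw⟩ := U d hdmem (t + k + i0) (t + k) (by omega) (by omega)
    have heq : t + k + i0 + d = t + k + (N + k) + i := by omega
    rw [heq] at hw
    have htk : t + k - k = t := by omega
    rw [htk] at hw
    have haM' : a (t + k + i0) ≤ M t := hMle t (t + k + i0) (by omega)
    have hδLw : δL ≤ w := le_trans (pow_le_pow_of_le_one hδpos.le hδ1 hdN.2) hwδ
    calc a (t + k + (N + k) + i) ≤ w * a (t + k + i0) + (1 - w) * M t := hw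
      _ ≤ δL * a (t + k + i0) + (1 - δL) * M t := by nlinarith [hδLw, haM', hw1]
      _ = δL * m (t + k) + (1 - δL) * M t := by rw [hi0']
  -- limits
  have hMbdd : BddBelow (Set.range M) := ⟨m 0, by
    rintro x ⟨t, rfl⟩
    exact le_trans (hmmono (Nat.zero_le t)) (hmM t)⟩
  have hmbdd : BddAbove (Set.range m) := ⟨M 0, by
    rintro x ⟨t, rfl⟩
    exact le_trans (hmM t) (hManti (Nat.zero_le t))⟩
  have hMlim : Tendsto M atTop (nhds (⨅ t, M t)) := tendsto_atTop_ciInf hManti hMbdd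
  have hmlim : Tendsto m atTop (nhds (⨆ t, m t)) := tendsto_atTop_ciSup hmmono hmbdd
  set MA := ⨅ t, M t
  set mA := ⨆ t, m t
  have h1 : mA ≤ MA := le_of_tendsto_of_tendsto' hmlim hMlim hmM
  have hMlim' : Tendsto (fun t => M (t + k + (N + k))) atTop (nhds MA) := by
    have h := (tendsto_add_atTop_iff_nat (k + (N + k))).2 hMlim
    have he : (fun t => M (t + k + (N + k))) = (fun t => M (t + (k + (N + k)))) := by
      funext t; congr 1; omega
    rw [he]; exact h
  have hmlim' : Tendsto (fun t => m (t + k)) atTop (nhds mA) :=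
    (tendsto_add_atTop_iff_nat k).2 hmlim
  have h2 : MA ≤ δL * mA + (1 - δL) * MA := by
    refine le_of_tendsto_of_tendsto' hMlim' ?_ key
    exact (hmlim'.const_mul δL).add (hMlim.const_mul (1 - δL))
  have h3 : MA = mA := le_antisymm (by nlinarith) h1
  refine ⟨mA, ?_⟩
  apply tendsto_of_tendsto_of_tendsto_of_le_of_le hmlim (h3 ▸ hMlim)
  · intro t
    exact hmle t t le_rfl
  · intro t
    exact hMle t t le_rfl

theorem zeroing_algorithm_eval_and_limits
    (k : ℕ) (hk : 1 ≤ k) (c : ℕ → ℕ) (hck : 0 < c k)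
    (hgcd : Finset.gcd ((Finset.Icc 1 k).filter fun m => c m ≠ 0) id = 1)
    (P : Polynomial ℝ)
    (hP : P = X ^ k - ∑ i ∈ Finset.Icc 1 k, C (c i : ℝ) * X ^ (k - i))
    (r : ℝ) (hr : 0 < r) (hroot : P.IsRoot r)
    (β : ℕ → ℝ) (hβ : ∃ n ∈ Finset.Icc 1 k, β n ≠ 0)
    (Q : ℕ → Polynomial ℝ)
    (hQ0 : Q 0 = ∑ n ∈ Finset.Icc 1 k, C (β n) * X ^ (k - n))
    (hQt : ∀ t, 1 ≤ t → Q t = X * Q (t - 1) - C ((Q (t - 1)).coeff (k - 1)) * P) :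
    (∀ t, (Q t).eval r = r ^ t * (Q 0).eval r) ∧
    ∀ n, 1 ≤ n → n ≤ k →
      ∃ L : ℝ,
        Filter.Tendsto (fun t => (Q t).coeff (k - n) / r ^ t) Filter.atTop (nhds L) ∧
        (0 < (Q 0).eval r → 0 < L) ∧
        ((Q 0).eval r = 0 → L = 0) ∧
        ((Q 0).eval r < 0 → L < 0) := by
  classical
  have hr0 : r ≠ 0 := ne_of_gt hr
  have hProot : P.eval r = 0 := hroot
  -- coefficients of P
  have hPco : ∀ j, P.coeff j = (if j = k then 1 else 0)
      - ∑ i ∈ Finset.Icc 1 k, if j = k - i then (c i : ℝ) else 0 := by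
    intro j
    rw [hP]
    simp [Polynomial.coeff_sub, Polynomial.finset_sum_coeff, Polynomial.coeff_C_mul,
      Polynomial.coeff_X_pow, mul_ite, mul_one, mul_zero]
  have hPk : P.coeff k = 1 := by
    rw [hPco]
    rw [if_pos rfl, Finset.sum_eq_zero, sub_zero]
    intro i hi
    simp only [Finset.mem_Icc] at hi
    rw [if_neg (by omega)]
  have hPmid : ∀ n, 1 ≤ n → n ≤ k → P.coeff (k - n) = -(c n : ℝ) := by
    intro n h1 h2
    rw [hPco]
    rw [if_neg (by omega)]
    rw [Finset.sum_eq_single_of_mem n (by simp; omega)]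
    · rw [if_pos rfl]; ring
    · intro i hi hne
      simp only [Finset.mem_Icc] at hi
      rw [if_neg (by omega)]
  have hPhi : ∀ j, k < j → P.coeff j = 0 := by
    intro j hj
    rw [hPco]
    rw [if_neg (by omega), Finset.sum_eq_zero, sub_zero]
    intro i hi
    simp only [Finset.mem_Icc] at hi
    rw [if_neg (by omega)]
  -- coefficients of Q vanish in degrees ≥ k
  have hQdeg : ∀ t j, k ≤ j → (Q t).coeff j = 0 := by
    intro t
    induction t with
    | zero =>
      intro j hj
      rw [hQ0, Polynomial.finset_sum_coeff]
      apply Finset.sum_eq_zero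
      intro n hn
      simp only [Finset.mem_Icc] at hn
      rw [Polynomial.coeff_C_mul, Polynomial.coeff_X_pow, if_neg (by omega), mul_zero]
    | succ t ih =>
      intro j hj
      rw [hQt (t + 1) (by omega)]
      simp only [Nat.add_sub_cancel]
      rw [Polynomial.coeff_sub, Polynomial.coeff_C_mul]
      obtain ⟨j', rfl⟩ : ∃ j', j = j' + 1 := ⟨j - 1, by omega⟩
      rw [Polynomial.coeff_X_mul]
      rcases eq_or_lt_of_le hj with h | h
      · rw [← h, hPk]
        have : j' = k - 1 := by omega
        rw [this]; ring
      · rw [ih j' (by omega), hPhi _ (by omega)]; ring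
  -- coefficient recurrences
  have hrec1 : ∀ t n, 1 ≤ n → n ≤ k - 1 →
      (Q (t + 1)).coeff (k - n) = (Q t).coeff (k - (n + 1)) + (Q t).coeff (k - 1) * c n := by
    intro t n h1 h2
    rw [hQt (t + 1) (by omega)]
    simp only [Nat.add_sub_cancel]
    rw [Polynomial.coeff_sub, Polynomial.coeff_C_mul]
    have he : k - n = (k - (n + 1)) + 1 := by omega
    rw [he, Polynomial.coeff_X_mul, ← he, hPmid n h1 (by omega)]
    ring
  have hreck : ∀ t, (Q (t + 1)).coeff 0 = (Q t).coeff (k - 1) * c k := by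
    intro t
    rw [hQt (t + 1) (by omega)]
    simp only [Nat.add_sub_cancel]
    rw [Polynomial.coeff_sub, Polynomial.coeff_C_mul, Polynomial.mul_coeff_zero,
      Polynomial.coeff_X_zero]
    have : (0 : ℕ) = k - k := by omega
    rw [this, hPmid k hk le_rfl]
    ring
  -- the scalar recurrence for the top coefficient
  have hq1rec : ∀ t, (Q (t + k)).coeff (k - 1)
      = ∑ m ∈ Finset.Icc 1 k, (c m : ℝ) * (Q (t + k - m)).coeff (k - 1) := by
    intro t
    have aux : ∀ j, j ≤ k - 1 → (Q (t + k)).coeff (k - 1)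
        = (∑ m ∈ Finset.Icc 1 j, (c m : ℝ) * (Q (t + k - m)).coeff (k - 1))
          + (Q (t + k - j)).coeff (k - (j + 1)) := by
      intro j
      induction j with
      | zero =>
        intro _
        simp
      | succ j ih =>
        intro hj
        rw [ih (by omega)]
        have ht : t + k - j = (t + k - (j + 1)) + 1 := by omega
        rw [ht, hrec1 (t + k - (j + 1)) (j + 1) (by omega) hj]
        rw [Finset.sum_Icc_succ_top (by omega : 1 ≤ j + 1)]
        ring
    have h1 := aux (k - 1) le_rfl
    have he1 : k - (k - 1 + 1) = 0 := by omega
    have he2 : t + k - (k - 1) = t + 1 := by omega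
    rw [he1, he2, hreck t] at h1
    have he3 : k = (k - 1) + 1 := by omega
    rw [h1, he3, Finset.sum_Icc_succ_top (by omega : 1 ≤ k - 1 + 1), ← he3]
    have he4 : t + k - k = t := by omega
    rw [he4]
    ring
  -- probability weights
  have hrk : r ^ k = ∑ i ∈ Finset.Icc 1 k, (c i : ℝ) * r ^ (k - i) := by
    have := hProot
    rw [hP] at this
    simp only [Polynomial.eval_sub, Polynomial.eval_pow, Polynomial.eval_X,
      Polynomial.eval_finset_sum, Polynomial.eval_mul, Polynomial.eval_C] at this
    linarith
  set p : ℕ → ℝ := fun m => (c m : ℝ) / r ^ m with hp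
  have hsum : ∑ m ∈ Finset.Icc 1 k, p m = 1 := by
    have : ∀ m ∈ Finset.Icc 1 k, p m = ((c m : ℝ) * r ^ (k - m)) / r ^ k := by
      intro m hm
      simp only [Finset.mem_Icc] at hm
      simp only [hp]
      rw [div_eq_div_iff (by positivity) (by positivity)]
      rw [mul_assoc, ← pow_add]
      congr 2
      omega
    rw [Finset.sum_congr rfl this, ← Finset.sum_div, ← hrk]
    field_simp
  set a : ℕ → ℝ := fun t => (Q t).coeff (k - 1) / r ^ t with hadef
  have ha : ∀ t, a (t + k) = ∑ m ∈ Finset.Icc 1 k, p m * a (t + k - m) := by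
    intro t
    simp only [hadef, hp]
    rw [hq1rec t]
    rw [Finset.sum_div]
    apply Finset.sum_congr rfl
    intro m hm
    simp only [Finset.mem_Icc] at hm
    have he : r ^ (t + k) = r ^ m * r ^ (t + k - m) := by
      rw [← pow_add]; congr 1; omega
    rw [he]
    field_simp
    try ring
  -- convergence of a
  have hconv : ∃ A, Tendsto a atTop (nhds A) := by
    apply renewal_conv k hk p ((Finset.Icc 1 k).filter fun m => c m ≠ 0) (Finset.filter_subset _ _)
      (by simp only [Finset.mem_filter, Finset.mem_Icc]; exact ⟨⟨hk, le_rfl⟩, by omega⟩) hgcd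
    · intro m hm
      simp only [Finset.mem_filter, Finset.mem_Icc] at hm
      have : 0 < c m := by omega
      simp only [hp]
      positivity
    · intro m hm hm2
      simp only [Finset.mem_filter, not_and, not_not] at hm2
      simp only [hp, hm2 hm, Nat.cast_zero, zero_div]
    · exact hsum
    · exact ha
  obtain ⟨A, hA⟩ := hconv
  -- Part 1: evaluation
  have hEval : ∀ t, (Q t).eval r = r ^ t * (Q 0).eval r := by
    intro t
    induction t with
    | zero => simp
    | succ t ih =>
      rw [hQt (t + 1) (by omega)]
      simp only [Nat.add_sub_cancel]
      rw [Polynomial.eval_sub, Polynomial.eval_mul, Polynomial.eval_mul, Polynomial.eval_X,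
        Polynomial.eval_C, hProot, mul_zero, sub_zero, ih, pow_succ]
      ring
  refine ⟨hEval, ?_⟩
  -- degrees
  have hdeg : ∀ t, (Q t).natDegree < k := by
    intro t
    rcases eq_or_ne (Q t) 0 with h0 | h0
    · rw [h0]; simp; omega
    · by_contra h
      push_neg at h
      exact (Polynomial.leadingCoeff_ne_zero.2 h0) (hQdeg t _ h)
  -- the limit values
  set g : ℕ → ℝ := fun n => (∑ m ∈ Finset.Icc n k, (c m : ℝ) * r ^ (k - m)) / r ^ (k - n + 1)
    with hg
  have hgpos : ∀ n, 1 ≤ n → n ≤ k → 0 < g n := by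
    intro n h1 h2
    simp only [hg]
    apply div_pos _ (by positivity)
    apply Finset.sum_pos'
    · intro m hm; positivity
    · exact ⟨k, by simp [Finset.mem_Icc]; omega, by positivity⟩
  have hgrec : ∀ n, 1 ≤ n → n ≤ k - 1 → g n = (g (n + 1) + c n) / r := by
    intro n h1 h2
    simp only [hg]
    have hsplit : Finset.Icc n k = insert n (Finset.Icc (n + 1) k) := by
      ext x; simp only [Finset.mem_Icc, Finset.mem_insert]; omega
    rw [hsplit, Finset.sum_insert (by simp)]
    have he1 : k - (n + 1) + 1 = k - n := by omega
    rw [he1, pow_succ]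
    field_simp
    try ring
  have T : ∀ d n, 1 ≤ n → n + d = k →
      Tendsto (fun t => (Q t).coeff (k - n) / r ^ t) atTop (nhds (A * g n)) := by
    intro d
    induction d with
    | zero =>
      intro n h1 h2
      have hnk : n = k := by omega
      subst hnk
      rw [← tendsto_add_atTop_iff_nat 1]
      have heq : ∀ t, (Q (t + 1)).coeff (n - n) / r ^ (t + 1) = (c n / r) * a t := by
        intro t
        have : n - n = 0 := by omega
        rw [this, hreck t]
        simp only [hadef]
        rw [pow_succ]
        field_simp
      have hlim : Tendsto (fun t => (c n / r) * a t) atTop (nhds ((c n / r) * A)) :=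
        hA.const_mul _
      have hval : (c n / r) * A = A * g n := by
        simp only [hg]
        rw [Finset.Icc_self, Finset.sum_singleton]
        norm_num
        exact mul_comm _ _
      rw [← hval]
      exact hlim.congr (fun t => (heq t).symm)
    | succ d ih =>
      intro n h1 h2
      have ihn := ih (n + 1) (by omega) (by omega)
      rw [← tendsto_add_atTop_iff_nat 1]
      have heq : ∀ t, (Q (t + 1)).coeff (k - n) / r ^ (t + 1)
          = (1 / r) * ((Q t).coeff (k - (n + 1)) / r ^ t) + (c n / r) * a t := by
        intro t
        rw [hrec1 t n h1 (by omega)]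
        simp only [hadef]
        rw [pow_succ]
        field_simp
      have hlim : Tendsto (fun t => (1 / r) * ((Q t).coeff (k - (n + 1)) / r ^ t)
          + (c n / r) * a t) atTop (nhds ((1 / r) * (A * g (n + 1)) + (c n / r) * A)) :=
        (ihn.const_mul _).add (hA.const_mul _)
      have hval : (1 / r) * (A * g (n + 1)) + (c n / r) * A = A * g n := by
        rw [hgrec n h1 (by omega)]
        field_simp
      rw [← hval]
      exact hlim.congr (fun t => (heq t).symm)
  -- the constant identity
  set K : ℝ := ∑ j ∈ Finset.range k, g (k - j) * r ^ j with hK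
  have hKpos : 0 < K := by
    simp only [hK]
    apply Finset.sum_pos
    · intro j hj
      simp only [Finset.mem_range] at hj
      exact mul_pos (hgpos (k - j) (by omega) (by omega)) (by positivity)
    · exact Finset.nonempty_range_iff.2 (by omega)
  have hAK : A * K = (Q 0).eval r := by
    have hconst : ∀ t, ∑ j ∈ Finset.range k, ((Q t).coeff j / r ^ t) * r ^ j
        = (Q 0).eval r := by
      intro t
      have h1 : (Q t).eval r = ∑ j ∈ Finset.range k, (Q t).coeff j * r ^ j :=
        Polynomial.eval_eq_sum_range' (hdeg t) r
      have h2 := hEval t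
      rw [h1] at h2
      have h3 : ∑ j ∈ Finset.range k, ((Q t).coeff j / r ^ t) * r ^ j
          = (∑ j ∈ Finset.range k, (Q t).coeff j * r ^ j) / r ^ t := by
        rw [Finset.sum_div]
        apply Finset.sum_congr rfl
        intro j _
        ring
      rw [h3, h2]
      field_simp
    have hlim1 : Tendsto (fun t => ∑ j ∈ Finset.range k, ((Q t).coeff j / r ^ t) * r ^ j)
        atTop (nhds (∑ j ∈ Finset.range k, (A * g (k - j)) * r ^ j)) := by
      apply tendsto_finset_sum
      intro j hj
      simp only [Finset.mem_range] at hj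
      have hT := T (k - (k - j)) (k - j) (by omega) (by omega)
      have he : k - (k - j) = j := by omega
      rw [he] at hT
      exact hT.mul_const _
    have hlim2 : Tendsto (fun t => ∑ j ∈ Finset.range k, ((Q t).coeff j / r ^ t) * r ^ j)
        atTop (nhds ((Q 0).eval r)) := by
      rw [show (fun t => ∑ j ∈ Finset.range k, ((Q t).coeff j / r ^ t) * r ^ j)
        = fun _ => (Q 0).eval r from funext hconst]
      exact tendsto_const_nhds
    have := tendsto_nhds_unique hlim1 hlim2
    rw [← this, hK, Finset.mul_sum]
    apply Finset.sum_congr rfl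
    intro j _
    ring
  -- conclusion
  intro n h1 h2
  refine ⟨A * g n, T (k - n) n h1 (by omega), ?_, ?_, ?_⟩
  · intro hpos
    have hApos : 0 < A := by nlinarith
    exact mul_pos hApos (hgpos n h1 h2)
  · intro hzero
    have hA0 : A = 0 := by
      have : A * K = 0 := by rw [hAK, hzero]
      rcases mul_eq_zero.1 this with h | h
      · exact h
      · exact absurd h hKpos.ne'
    rw [hA0, zero_mul]
  · intro hneg
    have hAneg : A < 0 := by nlinarith
    have := mul_pos (neg_pos.2 hAneg) (hgpos n h1 h2)
    nlinarith [hgpos n h1 h2]
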